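/- Periodic solution of the forward variance equation (equations (fps4)–(fps6)). The function vper₋ is T-periodic, continuously differentiable, and satisfies the differential equation vper₋′(t) = −2a(t) vper₋(t) + g(t)² for all t. Moreover, for all t ≥ t₀ one has the relation v₋(t,t₀) = vper₋(t) − e^{−2α(t,t₀)} vper₋(t₀). -/

import Mathlib

open MeasureTheory intervalIntegral

/-- Periodic solution of the forward variance equation (equations (fps4)–(fps6)). -/
theorem periodic_forward_variance
    (T : ℝ) (hT : 0 < T) (a g : ℝ → ℝ)
    (ha : Continuous a) (hg : Continuous g)
    (haper : ∀ t, a (t + T) = a t) (hgper : ∀ t, g (t + T) = g t)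
    (a0 g0 : ℝ) (ha0 : 0 < a0) (hg0 : 0 < g0)
    (halb : ∀ t, a0 ≤ a t) (hglb : ∀ t, g0 ≤ g t)
    (α : ℝ → ℝ) (hα : ∀ t, α t = ∫ u in (0:ℝ)..t, a u)
    (lam : ℝ) (hlam : lam = α T / T)
    (vper : ℝ → ℝ)
    (hvper : ∀ t, vper t = (1 - Real.exp (-2 * lam * T))⁻¹ *
      ∫ s in t..t + T, Real.exp (-2 * (α (t + T) - α s)) * g s ^ 2)
    (vm : ℝ → ℝ → ℝ)
    (hvm : ∀ t t0, vm t t0 = ∫ s in t0..t, Real.exp (-2 * (α t - α s)) * g s ^ 2) :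
    (∀ t, vper (t + T) = vper t)
    ∧ (∀ t, HasDerivAt vper (-2 * a t * vper t + g t ^ 2) t)
    ∧ Continuous (fun t => -2 * a t * vper t + g t ^ 2)
    ∧ (∀ t0 t, t0 ≤ t →
        vm t t0 = vper t - Real.exp (-2 * (α t - α t0)) * vper t0) := by
  have haint : ∀ u v : ℝ, IntervalIntegrable a volume u v := fun u v => ha.intervalIntegrable u v
  have hαfun : α = fun x => ∫ u in (0:ℝ)..x, a u := funext hα
  have hαd : ∀ t, HasDerivAt α (a t) t := by
    intro t
    rw [hαfun]
    exact intervalIntegral.integral_hasDerivAt_right (haint 0 t)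
      (ha.stronglyMeasurableAtFilter _ _) ha.continuousAt
  have hαc : Continuous α := continuous_iff_continuousAt.mpr fun t => (hαd t).continuousAt
  have hαadd : ∀ t, α (t + T) = α t + α T := by
    intro t
    rw [hα, hα, hα,
      ← intervalIntegral.integral_add_adjacent_intervals (haint 0 t) (haint t (t + T))]
    congr 1
    simpa using Function.Periodic.intervalIntegral_add_eq haper t 0
  have hαT : 0 < α T := by
    rw [hα]
    have h1 : (∫ u in (0:ℝ)..T, a0) ≤ ∫ u in (0:ℝ)..T, a u :=
      intervalIntegral.integral_mono_on hT.le intervalIntegrable_const (haint 0 T)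
        (fun x _ => halb x)
    have h2 : (0:ℝ) < ∫ u in (0:ℝ)..T, a0 := by
      simp only [intervalIntegral.integral_const, smul_eq_mul, sub_zero]
      positivity
    linarith
  have hc : 0 < 1 - Real.exp (-(2 * α T)) := by
    have : Real.exp (-(2 * α T)) < 1 := Real.exp_lt_one_iff.mpr (by linarith)
    linarith
  have hcne : (1 - Real.exp (-(2 * α T))) ≠ 0 := ne_of_gt hc
  have hlamT : -2 * lam * T = -(2 * α T) := by
    rw [hlam]; field_simp
  -- auxiliary primitive
  set h : ℝ → ℝ := fun s => Real.exp (2 * α s) * g s ^ 2 with hh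
  have hhc : Continuous h := (Real.continuous_exp.comp (continuous_const.mul hαc)).mul (hg.pow 2)
  have hhint : ∀ u v : ℝ, IntervalIntegrable h volume u v := fun u v => hhc.intervalIntegrable u v
  set F : ℝ → ℝ := fun x => ∫ s in (0:ℝ)..x, h s with hF
  have hFval : ∀ x, F x = ∫ s in (0:ℝ)..x, h s := fun _ => rfl
  have hFd : ∀ t, HasDerivAt F (h t) t := fun t =>
    intervalIntegral.integral_hasDerivAt_right (hhint 0 t)
      (hhc.stronglyMeasurableAtFilter _ _) hhc.continuousAt
  -- representation of vper
  have hvrep : ∀ t, vper t =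
      (1 - Real.exp (-(2 * α T)))⁻¹ * (Real.exp (-(2 * α (t + T))) * (F (t + T) - F t)) := by
    intro t
    rw [hvper t, hlamT]
    congr 1
    have e1 : ∀ s : ℝ, Real.exp (-2 * (α (t + T) - α s)) * g s ^ 2
        = Real.exp (-(2 * α (t + T))) * h s := by
      intro s
      rw [hh, ← mul_assoc, ← Real.exp_add]
      ring_nf
    rw [intervalIntegral.integral_congr (fun s _ => e1 s),
      intervalIntegral.integral_const_mul]
    congr 1
    rw [hFval, hFval,
      ← intervalIntegral.integral_add_adjacent_intervals (hhint 0 t) (hhint t (t + T))]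
    ring
  -- representation of vm
  have hvmrep : ∀ t t0, vm t t0 = Real.exp (-(2 * α t)) * (F t - F t0) := by
    intro t t0
    rw [hvm t t0]
    have e1 : ∀ s : ℝ, Real.exp (-2 * (α t - α s)) * g s ^ 2
        = Real.exp (-(2 * α t)) * h s := by
      intro s
      rw [hh, ← mul_assoc, ← Real.exp_add]
      ring_nf
    rw [intervalIntegral.integral_congr (fun s _ => e1 s),
      intervalIntegral.integral_const_mul]
    congr 1
    rw [hFval, hFval]
    exact (intervalIntegral.integral_interval_sub_left (hhint 0 t) (hhint 0 t0)).symm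
  -- part 1 : periodicity
  have hper : ∀ t, vper (t + T) = vper t := by
    intro t
    rw [hvper (t + T), hvper t]
    congr 1
    rw [← intervalIntegral.integral_comp_add_right
      (fun s => Real.exp (-2 * (α (t + T + T) - α s)) * g s ^ 2) T]
    apply intervalIntegral.integral_congr
    intro s _
    simp only
    rw [hgper, hαadd (t + T), hαadd s]
    ring_nf
  -- part 2 : derivative
  have hder : ∀ t, HasDerivAt vper (-2 * a t * vper t + g t ^ 2) t := by
    intro t
    have hvfun : vper = fun x =>
        (1 - Real.exp (-(2 * α T)))⁻¹ * (Real.exp (-(2 * α (x + T))) * (F (x + T) - F x)) :=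
      funext hvrep
    have hd0 : HasDerivAt (fun x : ℝ => x + T) 1 t := (hasDerivAt_id t).add_const T
    have hd1 : HasDerivAt (fun x => α (x + T)) (a t) t := by
      have := (hαd (t + T)).comp t hd0
      rw [haper t, mul_one] at this
      exact this
    have hd2 : HasDerivAt (fun x => -(2 * α (x + T))) (-(2 * a t)) t := by
      exact ((hd1.const_mul (2:ℝ)).neg)
    have hdE : HasDerivAt (fun x => Real.exp (-(2 * α (x + T))))
        (Real.exp (-(2 * α (t + T))) * -(2 * a t)) t := hd2.exp
    have hdF1 : HasDerivAt (fun x => F (x + T)) (h (t + T)) t := by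
      have := (hFd (t + T)).comp t hd0
      rw [mul_one] at this
      exact this
    have hdF : HasDerivAt (fun x => F (x + T) - F x) (h (t + T) - h t) t := hdF1.sub (hFd t)
    have hdv : HasDerivAt vper
        ((1 - Real.exp (-(2 * α T)))⁻¹ *
          ((Real.exp (-(2 * α (t + T))) * -(2 * a t)) * (F (t + T) - F t)
            + Real.exp (-(2 * α (t + T))) * (h (t + T) - h t))) t := by
      rw [hvfun]
      exact (hdE.mul hdF).const_mul _
    convert hdv using 1
    rw [hvrep t, hh]
    simp only
    rw [hgper t]
    have hX : Real.exp (-(2 * α (t + T))) * Real.exp (2 * α (t + T)) = 1 := by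
      rw [← Real.exp_add]; ring_nf; exact Real.exp_zero
    have hY : Real.exp (-(2 * α (t + T))) * Real.exp (2 * α t) = Real.exp (-(2 * α T)) := by
      rw [hαadd t, ← Real.exp_add]; ring_nf
    set E := Real.exp (-(2 * α (t + T))) with hE
    set c := 1 - Real.exp (-(2 * α T)) with hcdef
    have key : c⁻¹ * (E * Real.exp (2 * α (t + T)) - E * Real.exp (2 * α t)) = 1 := by
      rw [hX, hY, ← hcdef]
      exact inv_mul_cancel₀ hcne
    linear_combination (-(g t ^ 2)) * key
  refine ⟨hper, hder, ?_, ?_⟩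
  · have hv : Continuous vper :=
      continuous_iff_continuousAt.mpr fun t => (hder t).continuousAt
    exact ((continuous_const.mul ha).mul hv).add (hg.pow 2)
  · intro t0 t ht
    rw [hvmrep, hvrep, hvrep]
    have hFsh : F (t + T) - F (t0 + T) = Real.exp (2 * α T) * (F t - F t0) := by
      rw [hFval, hFval]
      rw [intervalIntegral.integral_interval_sub_left (hhint 0 (t+T)) (hhint 0 (t0+T)),
        ← intervalIntegral.integral_comp_add_right h T]
      have e1 : ∀ s : ℝ, h (s + T) = Real.exp (2 * α T) * h s := by
        intro s
        rw [hh]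
        simp only
        rw [hgper, hαadd s, ← mul_assoc, ← Real.exp_add]
        ring_nf
      rw [intervalIntegral.integral_congr (fun s _ => e1 s),
        intervalIntegral.integral_const_mul,
        intervalIntegral.integral_interval_sub_left (hhint 0 t) (hhint 0 t0)]
    have hFT : F (t + T) - F t
        = Real.exp (2 * α T) * (F t - F t0) + (F (t0 + T) - F t0) - (F t - F t0) := by
      linarith [hFsh]
    rw [hFT, hαadd t, hαadd t0]
    have hm : Real.exp (-(2 * (α t + α T)))
        = Real.exp (-(2 * α t)) * Real.exp (-(2 * α T)) := by
      rw [← Real.exp_add]; congr 1; ring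
    have hwW : Real.exp (-(2 * α T)) * Real.exp (2 * α T) = 1 := by
      rw [← Real.exp_add]; ring_nf; exact Real.exp_zero
    have hqn : Real.exp (-2 * (α t - α t0)) * Real.exp (-(2 * (α t0 + α T)))
        = Real.exp (-(2 * α t)) * Real.exp (-(2 * α T)) := by
      rw [← Real.exp_add, ← Real.exp_add]; ring_nf
    rw [hm]
    set u := Real.exp (-(2 * α t))
    set w := Real.exp (-(2 * α T)) with hwdef
    set q := Real.exp (-2 * (α t - α t0))
    set n := Real.exp (-(2 * (α t0 + α T)))
    set c := 1 - w with hcdef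
    set P := F t - F t0
    set Y := F (t0 + T) - F t0
    have hcne2 : c ≠ 0 := hcne
    field_simp
    linear_combination (u*P)*hcdef + (-(u*P))*hwW + Y*hqn
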